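/- Let F be a field of characteristic 0, let A ∈ M_n(F) with rank(A) = r < n. Then there exist matrices S, T ∈ M_n(F) with det S = 1 and det T = 1 and a nilpotent matrix N ∈ M_n(F) with rank(N) = r such that A = S · N · T. -/

import Mathlib

open Matrix LinearMap Module Submodule

lemma strictTriangular_pow_entry {R : Type*} [Semiring R] {n : ℕ}
    (M : Matrix (Fin n) (Fin n) R) (h : ∀ i j, M i j ≠ 0 → (i : ℕ) < (j : ℕ)) :
    ∀ k i j, (M ^ k) i j ≠ 0 → (i : ℕ) + k ≤ (j : ℕ) := by
  intro k
  induction k with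
  | zero =>
    intro i j hij
    rw [pow_zero] at hij
    rcases eq_or_ne i j with rfl | hne
    · omega
    · exact absurd (Matrix.one_apply_ne hne) hij
  | succ k ih =>
    intro i j hij
    rw [pow_succ, Matrix.mul_apply] at hij
    obtain ⟨l, -, hl⟩ := Finset.exists_ne_zero_of_sum_ne_zero hij
    have h1 : (M ^ k) i l ≠ 0 := left_ne_zero_of_mul hl
    have h2 : M l j ≠ 0 := right_ne_zero_of_mul hl
    have := ih i l h1
    have := h l j h2
    omega

lemma strictTriangular_nilpotent {R : Type*} [Semiring R] {n : ℕ}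
    (M : Matrix (Fin n) (Fin n) R) (h : ∀ i j, M i j ≠ 0 → (i : ℕ) < (j : ℕ)) :
    M ^ n = 0 := by
  ext i j
  by_contra hne
  have := strictTriangular_pow_entry M h n i j hne
  omega

/-- Any square matrix of rank `r ≤ n` over a field is `P * J * Q` with `P, Q` invertible
(in the sense of having two-sided inverses) and `J` the standard rank-`r` idempotent. -/
lemma exists_PJQ {F : Type*} [Field F] {n r : ℕ}
    (A : Matrix (Fin n) (Fin n) F) (hA : A.rank = r) (hr : r ≤ n) :
    ∃ P P' Q Q' : Matrix (Fin n) (Fin n) F, P * P' = 1 ∧ Q' * Q = 1 ∧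
      A = P * (Matrix.of fun i j : Fin n =>
        if i = j ∧ (j : ℕ) < r then (1 : F) else 0) * Q := by
  classical
  set f := A.mulVecLin with hf
  have hrange : finrank F (LinearMap.range f) = r := hA
  obtain ⟨W, hW⟩ := Submodule.exists_isCompl (LinearMap.ker f)
  have hdim : finrank F (Fin n → F) = n := by simp
  have hrn : finrank F (LinearMap.range f) + finrank F (LinearMap.ker f) = n := by
    rw [LinearMap.finrank_range_add_finrank_ker f, hdim]
  have hker : finrank F (LinearMap.ker f) = n - r := by omega
  have hWrank : finrank F W = r := by
    have := Submodule.finrank_add_eq_of_isCompl hW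
    rw [hdim] at this
    omega
  let bw : Basis (Fin r) F W := Module.finBasisOfFinrankEq F W hWrank
  let bk : Basis (Fin (n - r)) F (LinearMap.ker f) := Module.finBasisOfFinrankEq F _ hker
  let u : Fin r → (Fin n → F) := fun i => f (bw i)
  have hu : LinearIndependent F u := by
    have h1 : LinearIndependent F (fun i => ((bw i : Fin n → F))) :=
      bw.linearIndependent.map' W.subtype (Submodule.ker_subtype W)
    have h2 : Disjoint (Submodule.span F (Set.range fun i => ((bw i : Fin n → F))))
        (LinearMap.ker f) := by
      refine Disjoint.mono_left ?_ hW.disjoint.symm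
      rw [Submodule.span_le]
      rintro x ⟨i, rfl⟩
      exact (bw i).2
    exact h1.map h2
  let Sp := Submodule.span F (Set.range u)
  have hSp : finrank F Sp = r := by
    rw [finrank_span_eq_card hu, Fintype.card_fin]
  obtain ⟨U, hU⟩ := Sp.exists_isCompl
  have hUrank : finrank F U = n - r := by
    have := Submodule.finrank_add_eq_of_isCompl hU
    rw [hdim] at this
    omega
  let bu : Basis (Fin (n - r)) F U := Module.finBasisOfFinrankEq F _ hUrank
  let cs : Basis (Fin r) F Sp := Basis.span hu
  let b : Basis (Fin r ⊕ Fin (n - r)) F (Fin n → F) :=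
    (bw.prod bk).map (Submodule.prodEquivOfIsCompl W (LinearMap.ker f) hW.symm)
  let c : Basis (Fin r ⊕ Fin (n - r)) F (Fin n → F) :=
    (cs.prod bu).map (Submodule.prodEquivOfIsCompl Sp U hU)
  have hrn' : r + (n - r) = n := by omega
  let e : Fin r ⊕ Fin (n - r) ≃ Fin n := finSumFinEquiv.trans (finCongr hrn')
  let b' := b.reindex e
  let c' := c.reindex e
  have hb_inl : ∀ i, b (Sum.inl i) = (bw i : Fin n → F) := by
    intro i
    simp [b, Basis.prod_apply, Submodule.coe_prodEquivOfIsCompl']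
  have hc_inl : ∀ i, c (Sum.inl i) = u i := by
    intro i
    have h1 : c (Sum.inl i) = ((cs i : Sp) : Fin n → F) := by
      simp [c, Basis.prod_apply, Submodule.coe_prodEquivOfIsCompl']
    rw [h1]
    exact congrArg Subtype.val (Basis.span_apply hu i)
  have hb_inr : ∀ k, b (Sum.inr k) ∈ LinearMap.ker f := by
    intro k
    have : b (Sum.inr k) = (bk k : Fin n → F) := by
      simp [b, Basis.prod_apply, Submodule.coe_prodEquivOfIsCompl']
    rw [this]
    exact (bk k).2
  have he_inl : ∀ i : Fin r, (e (Sum.inl i) : ℕ) = (i : ℕ) := by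
    intro i
    simp [e]
  have he_inr : ∀ k : Fin (n - r), (e (Sum.inr k) : ℕ) = r + (k : ℕ) := by
    intro k
    simp [e]
  have hM : LinearMap.toMatrix b' c' f = Matrix.of (fun i j : Fin n =>
      if i = j ∧ (j : ℕ) < r then (1 : F) else 0) := by
    ext i j
    rw [LinearMap.toMatrix_apply, Basis.reindex_apply, Basis.repr_reindex_apply]
    rcases hj : e.symm j with jl | jr
    · have hj' : j = e (Sum.inl jl) := by rw [← hj, Equiv.apply_symm_apply]
      have hfb : f (b (Sum.inl jl)) = c (Sum.inl jl) := by rw [hb_inl, hc_inl]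
      rw [hfb, Basis.repr_self]
      have hjr : (j : ℕ) < r := by
        rw [hj', he_inl]
        exact jl.isLt
      have hiff : (Sum.inl jl = e.symm i) ↔ i = j := by
        rw [← hj]
        exact ⟨fun h => (e.symm.injective h).symm, fun h => h ▸ rfl⟩
      by_cases hij : i = j <;>
        simp [Matrix.of_apply, Finsupp.single_apply, hiff, hij, hjr, hj]
    · have hfb : f (b (Sum.inr jr)) = 0 := by
        have := hb_inr jr
        rwa [LinearMap.mem_ker] at this
      have hjr : ¬ (j : ℕ) < r := by
        have hj' : j = e (Sum.inr jr) := by rw [← hj, Equiv.apply_symm_apply]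
        rw [hj', he_inr]
        omega
      rw [hfb, map_zero]
      simp [Matrix.of_apply, hjr]
  let std := Pi.basisFun F (Fin n)
  refine ⟨LinearMap.toMatrix c' std LinearMap.id, LinearMap.toMatrix std c' LinearMap.id,
    LinearMap.toMatrix std b' LinearMap.id, LinearMap.toMatrix b' std LinearMap.id, ?_, ?_, ?_⟩
  · rw [← LinearMap.toMatrix_comp std c' std, LinearMap.id_comp, LinearMap.toMatrix_id]
  · rw [← LinearMap.toMatrix_comp std b' std, LinearMap.id_comp, LinearMap.toMatrix_id]
  · rw [← hM, ← LinearMap.toMatrix_comp b' c' std, ← LinearMap.toMatrix_comp std b' std,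
      LinearMap.id_comp, LinearMap.comp_id, LinearMap.toMatrix_eq_toMatrix', hf,
      ← Matrix.toLin'_apply', LinearMap.toMatrix'_toLin']

/-- If `A ∈ M_n(F)` has rank `r < n`, then `A = S · N · T`
with `det S = det T = 1` and `N` nilpotent of rank `r`. -/
theorem exists_sl_factorization_nilpotent {F : Type*} [Field F] [CharZero F] {n r : ℕ}
    (A : Matrix (Fin n) (Fin n) F) (hA : A.rank = r) (hr : r < n) :
    ∃ S T N : Matrix (Fin n) (Fin n) F, S.det = 1 ∧ T.det = 1 ∧
      IsNilpotent N ∧ N.rank = r ∧ A = S * N * T := by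
  classical
  obtain ⟨m, rfl⟩ : ∃ m, n = m + 1 := ⟨n - 1, by omega⟩
  obtain ⟨P, P', Q, Q', hPP', hQ'Q, hAPJQ⟩ := exists_PJQ A hA hr.le
  set J : Matrix (Fin (m + 1)) (Fin (m + 1)) F :=
    Matrix.of (fun i j => if i = j ∧ (j : ℕ) < r then 1 else 0) with hJ
  set σ : Equiv.Perm (Fin (m + 1)) := finRotate (m + 1) with hσ
  set N : Matrix (Fin (m + 1)) (Fin (m + 1)) F := J.submatrix id σ.symm with hN
  have hNentry : ∀ i j, N i j ≠ 0 → i = σ.symm j ∧ (i : ℕ) < r := by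
    intro i j h
    rw [hN, Matrix.submatrix_apply, id_eq, hJ] at h
    simp only [Matrix.of_apply, ne_eq, ite_eq_right_iff, not_forall] at h
    obtain ⟨⟨h1, h2⟩, -⟩ := h
    exact ⟨h1, by rw [h1]; exact h2⟩
  have hval : ∀ i : Fin (m + 1), (i : ℕ) < r → ((σ i : ℕ) = (i : ℕ) + 1) := by
    intro i hi
    have hne : i ≠ Fin.last m := by
      intro h
      rw [h, Fin.val_last] at hi
      omega
    rw [hσ, finRotate_succ_apply, Fin.val_add_one, if_neg hne]
  have hstrict : ∀ i j, N i j ≠ 0 → (i : ℕ) < (j : ℕ) := by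
    intro i j h
    obtain ⟨h1, h2⟩ := hNentry i j h
    have hj : σ i = j := by rw [h1, Equiv.apply_symm_apply]
    have h3 := hval i h2
    rw [hj] at h3
    omega
  have hrow : ∀ j, N (Fin.last m) j = 0 := by
    intro j
    by_contra h
    have := (hNentry _ _ h).2
    rw [Fin.val_last] at this
    omega
  have hcol : ∀ i, N i 0 = 0 := by
    intro i
    by_contra h
    obtain ⟨h1, h2⟩ := hNentry i 0 h
    have h3 := hval i h2
    have h4 : σ i = 0 := by rw [h1, Equiv.apply_symm_apply]
    rw [h4] at h3
    simp at h3
  have hPσ : (σ.toPEquiv.toMatrix : Matrix (Fin (m + 1)) (Fin (m + 1)) F) *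
      σ.symm.toPEquiv.toMatrix = 1 := by
    rw [← PEquiv.toMatrix_trans, ← Equiv.toPEquiv_trans, Equiv.self_trans_symm,
      Equiv.toPEquiv_refl, PEquiv.toMatrix_refl]
  have hJN : J * (σ.toPEquiv.toMatrix : Matrix (Fin (m + 1)) (Fin (m + 1)) F) = N :=
    PEquiv.mul_toMatrix_toPEquiv J σ
  have hJ' : N * (σ.symm.toPEquiv.toMatrix : Matrix (Fin (m + 1)) (Fin (m + 1)) F) = J := by
    rw [← hJN, Matrix.mul_assoc, hPσ, Matrix.mul_one]
  set Q₂ : Matrix (Fin (m + 1)) (Fin (m + 1)) F := σ.symm.toPEquiv.toMatrix * Q with hQ₂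
  have hA2 : A = P * N * Q₂ := by
    rw [hAPJQ, ← hJ', hQ₂]
    simp only [Matrix.mul_assoc]
  have hPdet : IsUnit P.det := Matrix.isUnit_det_of_right_inverse hPP'
  have hQ2det : IsUnit Q₂.det := by
    have hPσ' : (σ.symm.toPEquiv.toMatrix : Matrix (Fin (m + 1)) (Fin (m + 1)) F) *
        σ.toPEquiv.toMatrix = 1 := by
      rw [← PEquiv.toMatrix_trans, ← Equiv.toPEquiv_trans, Equiv.symm_trans_self,
        Equiv.toPEquiv_refl, PEquiv.toMatrix_refl]
    rw [hQ₂, Matrix.det_mul]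
    exact (Matrix.isUnit_det_of_right_inverse hPσ').mul
      (Matrix.isUnit_det_of_left_inverse hQ'Q)
  have hdP0 : P.det ≠ 0 := hPdet.ne_zero
  have hdQ0 : Q₂.det ≠ 0 := hQ2det.ne_zero
  set d1 : Fin (m + 1) → F := fun i => if i = Fin.last m then (P.det)⁻¹ else 1 with hd1
  set d2 : Fin (m + 1) → F := fun j => if j = 0 then (Q₂.det)⁻¹ else 1 with hd2
  set S : Matrix (Fin (m + 1)) (Fin (m + 1)) F := P * Matrix.diagonal d1 with hS
  set T : Matrix (Fin (m + 1)) (Fin (m + 1)) F := Matrix.diagonal d2 * Q₂ with hT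
  have hD1N : Matrix.diagonal d1 * N = N := by
    ext i j
    rw [Matrix.diagonal_mul]
    rcases eq_or_ne i (Fin.last m) with rfl | hne
    · rw [hrow]
      simp
    · rw [hd1]
      simp [hne]
  have hND2 : N * Matrix.diagonal d2 = N := by
    ext i j
    rw [Matrix.mul_diagonal]
    rcases eq_or_ne j 0 with rfl | hne
    · rw [hcol]
      simp
    · rw [hd2]
      simp [hne]
  have hdetd1 : (Matrix.diagonal d1).det = (P.det)⁻¹ := by
    rw [Matrix.det_diagonal, hd1]
    simp
  have hdetd2 : (Matrix.diagonal d2).det = (Q₂.det)⁻¹ := by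
    rw [Matrix.det_diagonal, hd2]
    simp
  have hdetS : S.det = 1 := by
    rw [hS, Matrix.det_mul, hdetd1, mul_inv_cancel₀ hdP0]
  have hdetT : T.det = 1 := by
    rw [hT, Matrix.det_mul, hdetd2, inv_mul_cancel₀ hdQ0]
  have hfinal : A = S * N * T := by
    rw [hA2, hS, hT]
    calc P * N * Q₂ = P * (Matrix.diagonal d1 * N * Matrix.diagonal d2) * Q₂ := by
          rw [hD1N, hND2]
      _ = P * Matrix.diagonal d1 * N * (Matrix.diagonal d2 * Q₂) := by
          simp only [Matrix.mul_assoc]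
  refine ⟨S, T, N, hdetS, hdetT, ⟨m + 1, strictTriangular_nilpotent N hstrict⟩, ?_, hfinal⟩
  have hSu : IsUnit S.det := by rw [hdetS]; exact isUnit_one
  have hTu : IsUnit T.det := by rw [hdetT]; exact isUnit_one
  rw [hfinal, Matrix.rank_mul_eq_left_of_isUnit_det T (S * N) hTu,
    Matrix.rank_mul_eq_right_of_isUnit_det S N hSu] at hA
  exact hA
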